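/- Let n, k ≥ 2 and let f be a k-fold on (ℂⁿ,0) written as f = l ∘ f₁ ∘ h⁻¹ for germs of biholomorphisms h, l on (ℂⁿ,0), where f₁(x) = (x₁^k, x₂, …, xₙ). Let φ₁(x) = (λx₁, x₂, …, xₙ) with λ = e^{2πi/k}. Then every reflection ρ on (ℂⁿ,0) associated with f (i.e. satisfying f ∘ ρ = f as germs) is of the form ρ = h ∘ φ₁^j ∘ h⁻¹ for some j ∈ {1, …, k−1}. -/

import Mathlib

noncomputable section

open Filter Function

/-- ℂⁿ as the space of functions `Fin n → ℂ`. -/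
abbrev Cn (n : ℕ) : Type := Fin n → ℂ

/-- Equality of germs at 0 of maps (ℂⁿ,0) → (ℂⁿ,0). -/
def GermEq {n : ℕ} (f g : Cn n → Cn n) : Prop := f =ᶠ[nhds 0] g

/-- Germ at 0 of a holomorphic map (ℂⁿ,0) → (ℂⁿ,0): holomorphic on a
neighborhood of 0 and sending 0 to 0. -/
def IsHoloGerm {n : ℕ} (f : Cn n → Cn n) : Prop :=
  f 0 = 0 ∧ ∀ᶠ x in nhds (0 : Cn n), AnalyticAt ℂ f x

/-- Germ of biholomorphism on (ℂⁿ,0): holomorphic germ with invertible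
derivative at 0. -/
def IsBiholGerm {n : ℕ} (h : Cn n → Cn n) : Prop :=
  IsHoloGerm h ∧ IsUnit (fderiv ℂ h 0)

/-- φ has order exactly r as a germ at 0 (φ^[r] = id as germs, r minimal). -/
def HasOrderGerm {n : ℕ} (φ : Cn n → Cn n) (r : ℕ) : Prop :=
  GermEq (φ^[r]) id ∧ ∀ m : ℕ, 0 < m → m < r → ¬ GermEq (φ^[m]) id

/-- The fixed-point set of φ near 0 is a complex submanifold of codimension 1:
locally the zero set of a holomorphic submersion F : (ℂⁿ,0) → (ℂ,0). -/
def FixIsHypersurface {n : ℕ} (φ : Cn n → Cn n) : Prop :=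
  ∃ F : Cn n → ℂ, F 0 = 0 ∧ AnalyticAt ℂ F 0 ∧ fderiv ℂ F 0 ≠ 0 ∧
    ∀ᶠ x in nhds (0 : Cn n), (φ x = x ↔ F x = 0)

/-- A reflection on (ℂⁿ,0): germ of biholomorphism of finite order ≥ 2 whose
fixed-point set is a codimension-1 complex submanifold. -/
def IsReflection {n : ℕ} (φ : Cn n → Cn n) : Prop :=
  IsBiholGerm φ ∧ (∃ r : ℕ, 2 ≤ r ∧ HasOrderGerm φ r) ∧ FixIsHypersurface φ

/-- A reflection of order exactly k. -/
def IsReflectionOfOrder {n : ℕ} (φ : Cn n → Cn n) (k : ℕ) : Prop :=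
  IsBiholGerm φ ∧ HasOrderGerm φ k ∧ FixIsHypersurface φ

/-- The canonical k-fold f₁(x) = (x₁^k, x₂, …, xₙ). -/
def canonFold (n k : ℕ) : Cn n → Cn n := fun x i => if (i : ℕ) = 0 then x i ^ k else x i

/-- The canonical reflection φ₁(x) = (λ x₁, x₂, …, xₙ) with λ = e^{2πi/k}. -/
def canonRefl (n k : ℕ) : Cn n → Cn n :=
  fun x i => if (i : ℕ) = 0 then Complex.exp (2 * (Real.pi : ℂ) * Complex.I / (k : ℂ)) * x i
    else x i

/-- f is a k-fold: a holomorphic germ 𝒜-equivalent to the canonical k-fold,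
i.e. f = l ∘ f₁ ∘ h⁻¹ as germs for germs of biholomorphisms h, l
(equivalently, f ∘ h = l ∘ f₁ as germs). -/
def IsKFold {n : ℕ} (k : ℕ) (f : Cn n → Cn n) : Prop :=
  IsHoloGerm f ∧ ∃ h l : Cn n → Cn n, IsBiholGerm h ∧ IsBiholGerm l ∧
    GermEq (f ∘ h) (l ∘ canonFold n k)

/-- The canonical k-fold in the i-th coordinate: fᵢ(x) = (x₁, …, xᵢ^k, …, xₙ). -/
def foldAt (n k : ℕ) (i : Fin n) : Cn n → Cn n := fun x j => if j = i then x j ^ k else x j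

section Aux

open Filter Topology Set Function

/-- From an `IsUnit` continuous linear map, build a continuous linear equiv. -/
lemma isUnit_toCLE {n : ℕ} {T : Cn n →L[ℂ] Cn n} (hT : IsUnit T) :
    ∃ e : Cn n ≃L[ℂ] Cn n, (e : Cn n →L[ℂ] Cn n) = T := by
  obtain ⟨u, rfl⟩ := hT
  refine ⟨ContinuousLinearEquiv.equivOfInverse ↑u ↑u⁻¹ (fun x => ?_) (fun x => ?_), rfl⟩
  · rw [← ContinuousLinearMap.mul_apply, u.inv_mul, ContinuousLinearMap.one_apply]
  · rw [← ContinuousLinearMap.mul_apply, u.mul_inv, ContinuousLinearMap.one_apply]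

/-- Local inverse package for a germ of biholomorphism. -/
lemma bihol_pack {n : ℕ} {h : Cn n → Cn n} (hh : IsBiholGerm h) :
    ∃ h' : Cn n → Cn n,
      (∀ᶠ x in nhds (0:Cn n), h' (h x) = x) ∧
      (∀ᶠ y in nhds (0:Cn n), h (h' y) = y) ∧
      (∀ᶠ y in nhds (0:Cn n), AnalyticAt ℂ h' y) ∧
      Filter.map h (nhds 0) = nhds (0:Cn n) := by
  obtain ⟨⟨h0, hana⟩, hunit⟩ := hh
  obtain ⟨e, he⟩ := isUnit_toCLE hunit
  have hana0 : AnalyticAt ℂ h 0 := hana.self_of_nhds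
  have hdiff : HasFDerivAt h ((e : Cn n →L[ℂ] Cn n)) 0 :=
    he ▸ hana0.differentiableAt.hasFDerivAt
  have hcd : ContDiffAt ℂ ⊤ h 0 := hana0.contDiffAt
  set Φ := hcd.toOpenPartialHomeomorph h hdiff (by simp) with hΦdef
  have hΦcoe : ⇑Φ = h := rfl
  have hsrc : (0:Cn n) ∈ Φ.source := hcd.mem_toOpenPartialHomeomorph_source hdiff (by simp)
  have htgt : (0:Cn n) ∈ Φ.target := by
    have := Φ.map_source hsrc
    rwa [show Φ 0 = 0 from by rw [show Φ 0 = h 0 from rfl, h0]] at this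
  have hmap : Filter.map h (nhds 0) = nhds (0:Cn n) := by
    have := Φ.map_nhds_eq hsrc
    rwa [hΦcoe, h0] at this
  have hleft : ∀ᶠ x in nhds (0:Cn n), Φ.symm (h x) = x := by
    filter_upwards [Φ.open_source.mem_nhds hsrc] with x hx
    exact Φ.left_inv hx
  refine ⟨Φ.symm, hleft, ?_, ?_, hmap⟩
  · filter_upwards [Φ.open_target.mem_nhds htgt] with y hy
    exact Φ.right_inv hy
  · -- analyticity of the inverse near 0
    obtain ⟨U, hUsub, hUopen, hU0⟩ := eventually_nhds_iff.mp hana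
    have hAU : AnalyticOnNhd ℂ h U := fun x hx => hUsub x hx
    have hfd : AnalyticOnNhd ℂ (fderiv ℂ h) U := hAU.fderiv
    have hfc : ContinuousAt (fderiv ℂ h) 0 := (hfd 0 hU0).continuousAt
    have hevU : ∀ᶠ x in nhds (0:Cn n), IsUnit (fderiv ℂ h x) :=
      hfc.eventually_mem (Units.isOpen.mem_nhds hunit)
    rw [← hmap, eventually_map]
    filter_upwards [Φ.open_source.mem_nhds hsrc, hana, hevU, hleft] with x hxs hxa hxu hxl
    obtain ⟨ex, hex⟩ := isUnit_toCLE hxu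
    refine Φ.analyticAt_symm (i := ex) (Φ.map_source hxs) ?_ ?_
    · rw [hxl]; exact hxa
    · rw [hxl]; exact hex.symm

/-- Iterates of the canonical reflection. -/
lemma canonRefl_iterate (n k : ℕ) (j : ℕ) (x : Cn n) (i : Fin n) :
    (canonRefl n k)^[j] x i =
      if (i:ℕ) = 0 then Complex.exp (2 * (Real.pi : ℂ) * Complex.I / (k : ℂ)) ^ j * x i
      else x i := by
  induction j generalizing x with
  | zero => simp
  | succ j ih =>
    rw [Function.iterate_succ_apply, ih]
    by_cases hi : (i:ℕ) = 0
    · rw [if_pos hi, if_pos hi, show canonRefl n k x i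
        = Complex.exp (2 * (Real.pi : ℂ) * Complex.I / (k : ℂ)) * x i from by
          rw [canonRefl, if_pos hi]]
      ring
    · rw [if_neg hi, if_neg hi, canonRefl, if_neg hi]

/-- Domain property: if a finite product of analytic functions vanishes on a connected
open set containing 0, one of the factors vanishes identically. -/
lemma prod_factor_zero {n : ℕ} {U : Set (Cn n)} (hUo : IsOpen U) (hUc : IsPreconnected U)
    (h0U : (0:Cn n) ∈ U) (s : Finset ℂ) (g : ℂ → Cn n → ℂ)
    (hg : ∀ μ ∈ s, AnalyticOnNhd ℂ (g μ) U)
    (hprod : ∀ x ∈ U, ∏ μ ∈ s, g μ x = 0) :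
    ∃ μ ∈ s, Set.EqOn (g μ) 0 U := by
  classical
  induction s using Finset.induction_on with
  | empty =>
    exfalso
    have := hprod 0 h0U
    simpa using this
  | @insert a t ha ih =>
    by_cases hA : Set.EqOn (g a) 0 U
    · exact ⟨a, Finset.mem_insert_self a t, hA⟩
    · have hb : ∃ b ∈ U, g a b ≠ 0 := by
        by_contra hc; push_neg at hc; exact hA fun x hx => hc x hx
      obtain ⟨b, hbU, hgb⟩ := hb
      have hPana : AnalyticOnNhd ℂ (fun x => ∏ μ ∈ t, g μ x) U :=
        Finset.analyticOnNhd_fun_prod t fun μ hμ => hg μ (Finset.mem_insert_of_mem hμ)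
      have hPb : (fun x => ∏ μ ∈ t, g μ x) =ᶠ[nhds b] 0 := by
        have h1 : ∀ᶠ x in nhds b, g a x ≠ 0 :=
          ((hg a (Finset.mem_insert_self a t) b hbU).continuousAt).eventually_ne hgb
        filter_upwards [h1, hUo.eventually_mem hbU] with x hx1 hx2
        have hx := hprod x hx2
        rw [Finset.prod_insert ha] at hx
        exact (mul_eq_zero.mp hx).resolve_left hx1
      have hP0 : Set.EqOn (fun x => ∏ μ ∈ t, g μ x) 0 U :=
        hPana.eqOn_zero_of_preconnected_of_eventuallyEq_zero hUc hbU hPb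
      obtain ⟨μ, hμt, hμ⟩ := ih (fun μ hμ => hg μ (Finset.mem_insert_of_mem hμ))
        (fun x hx => hP0 hx)
      exact ⟨μ, Finset.mem_insert_of_mem hμt, hμ⟩

end Aux

/-- Proposition 2.5: any reflection associated with a k-fold
f = l ∘ f₁ ∘ h⁻¹ is of the form h ∘ φ₁^j ∘ h⁻¹ for some j ∈ {1, …, k−1}
(stated as ρ ∘ h = h ∘ φ₁^j as germs). -/
theorem stmt_1 (n k : ℕ) (hn : 2 ≤ n) (hk : 2 ≤ k)
    (f h l : Cn n → Cn n) (hf : IsHoloGerm f)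
    (hh : IsBiholGerm h) (hl : IsBiholGerm l)
    (hfhl : GermEq (f ∘ h) (l ∘ canonFold n k))
    (ρ : Cn n → Cn n) (hρ : IsReflection ρ)
    (hassoc : GermEq (f ∘ ρ) f) :
    ∃ j : ℕ, 1 ≤ j ∧ j ≤ k - 1 ∧ GermEq (ρ ∘ h) (h ∘ (canonRefl n k)^[j]) := by
  classical
  have hk0 : 0 < k := by omega
  haveI : NeZero n := ⟨by omega⟩
  haveI : NeZero k := ⟨by omega⟩
  set ζ := Complex.exp (2 * (Real.pi : ℂ) * Complex.I / (k : ℂ)) with hζdef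
  have hζ : IsPrimitiveRoot ζ k := Complex.isPrimitiveRoot_exp k (by omega)
  obtain ⟨h', hl1, hr1, h'ana, hmap⟩ := bihol_pack hh
  obtain ⟨l', ll1, lr1, l'ana, lmap⟩ := bihol_pack hl
  have hh0 : h 0 = 0 := hh.1.1
  have hρ0 : ρ 0 = 0 := hρ.1.1.1
  have hana : ∀ᶠ x in nhds (0:Cn n), AnalyticAt ℂ h x := hh.1.2
  have hρana : ∀ᶠ x in nhds (0:Cn n), AnalyticAt ℂ ρ x := hρ.1.1.2
  have tends_h : Filter.Tendsto h (nhds 0) (nhds (0:Cn n)) := hmap.le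
  have tends_ρ : Filter.Tendsto ρ (nhds 0) (nhds (0:Cn n)) := by
    have := (hρana.self_of_nhds).continuousAt
    rwa [ContinuousAt, hρ0] at this
  have tends_ρh : Filter.Tendsto (fun x => ρ (h x)) (nhds 0) (nhds (0:Cn n)) :=
    tends_ρ.comp tends_h
  set σ : Cn n → Cn n := fun x => h' (ρ (h x)) with hσdef
  have h'0 : h' 0 = 0 := by
    have := hl1.self_of_nhds; rwa [hh0] at this
  have tends_σ : Filter.Tendsto σ (nhds 0) (nhds (0:Cn n)) := by
    have th' : Filter.Tendsto h' (nhds 0) (nhds (0:Cn n)) := by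
      have := (h'ana.self_of_nhds).continuousAt
      rwa [ContinuousAt, h'0] at this
    exact th'.comp tends_ρh
  have hHS : ∀ᶠ x in nhds (0:Cn n), h (σ x) = ρ (h x) := tends_ρh.eventually hr1
  have hassoc' : (f ∘ ρ) =ᶠ[nhds (0:Cn n)] f := hassoc
  have hfhl' : (f ∘ h) =ᶠ[nhds (0:Cn n)] (l ∘ canonFold n k) := hfhl
  -- canonical fold is continuous and fixes 0
  have tends_f1 : Filter.Tendsto (canonFold n k) (nhds 0) (nhds (0:Cn n)) := by
    have hc : Continuous (canonFold n k) := continuous_pi fun i => by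
      simp only [canonFold]
      split_ifs with hi
      · exact (continuous_apply i).pow k
      · exact continuous_apply i
    have h0 : canonFold n k (0:Cn n) = 0 := by
      funext i
      simp only [canonFold]
      split_ifs <;> simp [zero_pow (by omega : k ≠ 0)]
    have := hc.continuousAt (x := (0:Cn n))
    rwa [ContinuousAt, h0] at this
  -- l ∘ f₁ ∘ σ = l ∘ f₁ as germs
  have step3 : ((f ∘ h) ∘ σ) =ᶠ[nhds (0:Cn n)] (f ∘ h) := by
    have e1 : ((f ∘ h) ∘ σ) =ᶠ[nhds (0:Cn n)] ((f ∘ ρ) ∘ h) := hHS.mono fun x hx => by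
      simp only [Function.comp_apply]; rw [hx]
    exact e1.trans (hassoc'.comp_tendsto tends_h)
  have step4 : ((l ∘ canonFold n k) ∘ σ) =ᶠ[nhds (0:Cn n)] (l ∘ canonFold n k) :=
    (hfhl'.comp_tendsto tends_σ).symm.trans (step3.trans hfhl')
  -- cancel l
  have step5 : ∀ᶠ x in nhds (0:Cn n), canonFold n k (σ x) = canonFold n k x := by
    have t1 : Filter.Tendsto (fun x => canonFold n k (σ x)) (nhds 0) (nhds (0:Cn n)) :=
      tends_f1.comp tends_σ
    filter_upwards [step4, t1.eventually ll1, tends_f1.eventually ll1] with x hx hx1 hx2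
    have hx' : l (canonFold n k (σ x)) = l (canonFold n k x) := hx
    calc canonFold n k (σ x) = l' (l (canonFold n k (σ x))) := hx1.symm
      _ = l' (l (canonFold n k x)) := by rw [hx']
      _ = canonFold n k x := hx2
  -- coordinates
  have coord0 : ∀ᶠ x in nhds (0:Cn n), σ x 0 ^ k = x 0 ^ k := step5.mono fun x hx => by
    have := congrFun hx (0 : Fin n)
    simpa [canonFold] using this
  have coordi : ∀ᶠ x in nhds (0:Cn n), ∀ i : Fin n, (i:ℕ) ≠ 0 → σ x i = x i :=
    step5.mono fun x hx i hi => by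
      have := congrFun hx i
      simpa [canonFold, hi] using this
  -- product of factors vanishes
  have hprod0 : ∀ᶠ x in nhds (0:Cn n),
      ∏ μ ∈ Polynomial.nthRootsFinset k (1 : ℂ), (σ x 0 - μ * x 0) = 0 :=
    coord0.mono fun x hx => by
      rw [← hζ.pow_sub_pow_eq_prod_sub_mul (σ x 0) (x 0) hk0, hx, sub_self]
  -- σ₀ is analytic near 0
  have hσ0ana : ∀ᶠ x in nhds (0:Cn n), AnalyticAt ℂ (fun y => σ y 0) x := by
    filter_upwards [hana, tends_h.eventually hρana, tends_ρh.eventually h'ana]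
      with x hx1 hx2 hx3
    exact ((ContinuousLinearMap.proj (R := ℂ) (φ := fun _ : Fin n => ℂ) 0).analyticAt
      (σ x)).comp ((hx3.comp hx2).comp hx1)
  -- ball on which everything holds
  obtain ⟨ε, hε, hball⟩ := Metric.mem_nhds_iff.mp (hσ0ana.and hprod0)
  have hUo : IsOpen (Metric.ball (0:Cn n) ε) := Metric.isOpen_ball
  have hUc : IsPreconnected (Metric.ball (0:Cn n) ε) := (convex_ball (0:Cn n) ε).isPreconnected
  have h0U : (0:Cn n) ∈ Metric.ball (0:Cn n) ε := Metric.mem_ball_self hε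
  obtain ⟨μ, hμmem, hμeq⟩ := prod_factor_zero hUo hUc h0U (Polynomial.nthRootsFinset k (1 : ℂ))
    (fun μ x => σ x 0 - μ * x 0)
    (fun μ _ x hx => ((hball hx).1).sub (analyticAt_const.mul
      ((ContinuousLinearMap.proj (R := ℂ) (φ := fun _ : Fin n => ℂ) 0).analyticAt x)))
    (fun x hx => (hball hx).2)
  have hμpow : μ ^ k = 1 := (Polynomial.mem_nthRootsFinset hk0 1).mp hμmem
  obtain ⟨j, hjk, hjζ⟩ := hζ.eq_pow_of_pow_eq_one hμpow
  have hσ0 : ∀ᶠ x in nhds (0:Cn n), σ x 0 = ζ ^ j * x 0 := by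
    filter_upwards [hUo.mem_nhds h0U] with x hx
    have h2 : σ x 0 - μ * x 0 = 0 := by simpa using hμeq hx
    rw [hjζ]
    exact sub_eq_zero.mp h2
  -- σ agrees with the canonical reflection iterate
  have hσφ : ∀ᶠ x in nhds (0:Cn n), σ x = (canonRefl n k)^[j] x := by
    filter_upwards [hσ0, coordi] with x hx0 hxi
    funext i
    rw [canonRefl_iterate]
    by_cases hi : (i:ℕ) = 0
    · rw [if_pos hi]
      have hii : i = (0 : Fin n) := Fin.ext (by simpa using hi)
      rw [hii]
      exact hx0
    · rw [if_neg hi]; exact hxi i hi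
  -- j ≠ 0
  have hj0 : j ≠ 0 := by
    rintro rfl
    have hσid : ∀ᶠ x in nhds (0:Cn n), σ x = x := hσφ.mono fun x hx => by simpa using hx
    have hfix : ∀ᶠ x in nhds (0:Cn n), ρ (h x) = h x := by
      filter_upwards [hHS, hσid] with x h1 h2
      rw [← h1, h2]
    have hρid : GermEq ρ id := by
      show ∀ᶠ y in nhds (0:Cn n), ρ y = id y
      rw [← hmap, Filter.eventually_map]
      simpa using hfix
    obtain ⟨r, hr2, hord⟩ := hρ.2.1
    have := hord.2 1 one_pos (by omega)
    apply this
    rw [Function.iterate_one]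
    exact hρid
  refine ⟨j, by omega, by omega, ?_⟩
  show (ρ ∘ h) =ᶠ[nhds (0:Cn n)] (h ∘ (canonRefl n k)^[j])
  filter_upwards [hHS, hσφ] with x h1 h2
  simp only [Function.comp_apply]
  rw [← h1, h2]
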